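/- For every n ≥ 1, Player 0 wins the pushdown parity game (G_n, col_n) of the lower-bound family defined in the context. -/

import Mathlib

namespace FDGames


/-- A game graph: ownership partition, edge relation, initial vertex, and
every vertex has at least one successor. -/
structure GameGraph (V : Type*) where
  own : V → Fin 2
  E : V → V → Prop
  vin : V
  succ : ∀ v, ∃ v', E v v'

/-- An infinite play: starts at the initial vertex and follows edges. -/
def IsPlay {V : Type*} (G : GameGraph V) (ρ : ℕ → V) : Prop :=
  ρ 0 = G.vin ∧ ∀ m, G.E (ρ m) (ρ (m + 1))

/-- A play consistent with the strategy `σ` of Player `i`; the strategy gets the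
history (the vertices strictly before the current one) and the current vertex. -/
def ConsistentPlay {V : Type*} (G : GameGraph V) (i : Fin 2)
    (σ : List V → V → V) (ρ : ℕ → V) : Prop :=
  IsPlay G ρ ∧ ∀ m, G.own (ρ m) = i → ρ (m + 1) = σ ((List.range m).map ρ) (ρ m)

/-- The minimal color seen infinitely often along `ρ`. -/
noncomputable def minInfCol {V : Type*} (col : V → ℕ) (ρ : ℕ → V) : ℕ :=
  sInf {c | ∀ N, ∃ m, N ≤ m ∧ col (ρ m) = c}

/-- The play `ρ` is winning for Player `i` in the (min-) parity game. -/
def WinningPlay {V : Type*} (col : V → ℕ) (i : Fin 2) (ρ : ℕ → V) : Prop :=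
  minInfCol col ρ % 2 = (i : ℕ)

/-- A (legal) strategy always moves along edges. -/
def IsStrategy {V : Type*} (G : GameGraph V) (σ : List V → V → V) : Prop :=
  ∀ h v, G.E v (σ h v)

/-- A positional strategy only depends on the current vertex. -/
def Positional {V : Type*} (σ : List V → V → V) : Prop :=
  ∀ h h' v, σ h v = σ h' v

/-- A winning strategy for Player `i` in the parity game `(G, col)`. -/
def WinningStrategy {V : Type*} (G : GameGraph V) (col : V → ℕ) (i : Fin 2)
    (σ : List V → V → V) : Prop :=
  IsStrategy G σ ∧ ∀ ρ, ConsistentPlay G i σ ρ → WinningPlay col i ρ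

/-- Player `i` wins the parity game `(G, col)`. -/
def WinsGame {V : Type*} (G : GameGraph V) (col : V → ℕ) (i : Fin 2) : Prop :=
  ∃ σ, WinningStrategy G col i σ

/-- A pushdown system.  The bottom-of-stack symbol `⊥` is kept implicit: a stack
content is the list of symbols from `Γ` strictly above `⊥` (top = head), and the
top-of-stack symbol read by a transition is an `Option Γ` (`none` = `⊥`).  Since
`⊥` can neither be written nor deleted, a transition reading a symbol of `Γ`
rewrites it to at most two symbols of `Γ`, and a transition reading `⊥` writes at
most one symbol of `Γ` above `⊥`.  The system is deadlock-free. -/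
structure PDS (Q Γ : Type*) where
  qin : Q
  Δ : Set (Q × Option Γ × Q × List Γ)
  bound2 : ∀ q A p α, (q, A, p, α) ∈ Δ → α.length ≤ 2
  bound1 : ∀ q p α, (q, (none : Option Γ), p, α) ∈ Δ → α.length ≤ 1
  df : ∀ q A, ∃ q' α, (q, A, q', α) ∈ Δ

/-- Configurations: a state together with the stack content above `⊥`. -/
abbrev Config (Q Γ : Type*) := Q × List Γ

/-- The stack height of a configuration. -/
def confSh {Q Γ : Type*} (v : Config Q Γ) : ℕ := v.2.length

/-- One step of the pushdown system between configurations. -/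
def PDS.step {Q Γ : Type*} (P : PDS Q Γ) (u v : Config Q Γ) : Prop :=
  (u.2 = [] ∧ (u.1, (none : Option Γ), v.1, v.2) ∈ P.Δ) ∨
  (∃ a rest α, u.2 = a :: rest ∧ (u.1, some a, v.1, α) ∈ P.Δ ∧ v.2 = α ++ rest)

/-- The pushdown game graph induced by a PDS and a partition of its states. -/
def PDS.graph {Q Γ : Type*} (P : PDS Q Γ) (own : Q → Fin 2) :
    GameGraph (Config Q Γ) where
  own := fun v => own v.1
  E := P.step
  vin := (P.qin, [])
  succ := by
    rintro ⟨q, _ | ⟨a, rest⟩⟩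
    · obtain ⟨q', α, h⟩ := P.df q none
      exact ⟨(q', α), Or.inl ⟨rfl, h⟩⟩
    · obtain ⟨q', α, h⟩ := P.df q (some a)
      exact ⟨(q', α ++ rest), Or.inr ⟨a, rest, α, rfl, h, rfl⟩⟩

/-- The `i`-th prime number (`nthPrime 0 = 2`). -/
noncomputable def nthPrime (i : ℕ) : ℕ := Nat.nth Nat.Prime i

theorem nthPrime_pos (i : ℕ) : 0 < nthPrime i := (Nat.prime_nth_prime i).pos

/-- The states of the lower-bound pushdown system `P_n`:
`qin`, `qbox = q_□` and the counting states `cnt i j = q_{i+1}^j` with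
`j < p_{i+1}`. -/
inductive QLB (n : ℕ) where
  | qin : QLB n
  | qbox : QLB n
  | cnt : (i : Fin n) → (j : Fin (nthPrime i)) → QLB n

/-- The transition relation `Δ_n` of the lower-bound pushdown system. -/
def lbDelta (n : ℕ) : Set (QLB n × Option Unit × QLB n × List Unit) :=
  { t |
    t = (QLB.qin, some (), QLB.qin, [(), ()]) ∨
    t = (QLB.qin, none, QLB.qin, [()]) ∨
    t = (QLB.qin, some (), QLB.qbox, [(), ()]) ∨
    t = (QLB.qin, none, QLB.qbox, [()]) ∨
    (∃ i : Fin n, t = (QLB.qbox, some (), QLB.cnt i ⟨0, nthPrime_pos i⟩, [()])) ∨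
    (∃ (i : Fin n) (j : Fin (nthPrime i)),
      t = (QLB.cnt i j, some (),
           QLB.cnt i ⟨((j : ℕ) + 1) % nthPrime i, Nat.mod_lt _ (nthPrime_pos i)⟩, [])) ∨
    (∃ q : QLB n, q ≠ QLB.qin ∧ t = (q, none, q, [])) }

/-- The lower-bound pushdown system `P_n` (for `n ≥ 1`). -/
def lbPDS (n : ℕ) (hn : 1 ≤ n) : PDS (QLB n) Unit where
  qin := QLB.qin
  Δ := lbDelta n
  bound2 := by
    intro q A p α h
    simp only [lbDelta, Set.mem_setOf_eq, Prod.mk.injEq] at h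
    rcases h with ⟨-,-,-,rfl⟩|⟨-,-,-,rfl⟩|⟨-,-,-,rfl⟩|⟨-,-,-,rfl⟩|⟨i,-,-,-,rfl⟩|⟨i,j,-,-,-,rfl⟩|⟨q',hq,-,-,-,rfl⟩ <;> simp
  bound1 := by
    intro q p α h
    simp only [lbDelta, Set.mem_setOf_eq, Prod.mk.injEq, reduceCtorEq,
      false_and, and_false, false_or, exists_false, or_false] at h
    rcases h with ⟨-,-,-,rfl⟩|⟨-,-,-,rfl⟩|⟨q',hq,-,-,-,rfl⟩ <;> simp
  df := by
    intro q A
    rcases A with _ | u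
    · rcases q with _ | _ | ⟨i, j⟩
      · exact ⟨QLB.qin, [()], Or.inr (Or.inl rfl)⟩
      · refine ⟨QLB.qbox, [], ?_⟩
        refine Or.inr (Or.inr (Or.inr (Or.inr (Or.inr (Or.inr ⟨QLB.qbox, ?_, rfl⟩)))))
        exact by intro h; cases h
      · refine ⟨QLB.cnt i j, [], ?_⟩
        refine Or.inr (Or.inr (Or.inr (Or.inr (Or.inr (Or.inr ⟨QLB.cnt i j, ?_, rfl⟩)))))
        exact by intro h; cases h
    · rcases q with _ | _ | ⟨i, j⟩
      · exact ⟨QLB.qin, [(), ()], Or.inl rfl⟩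
      · exact ⟨QLB.cnt ⟨0, hn⟩ ⟨0, nthPrime_pos _⟩, [()],
          Or.inr (Or.inr (Or.inr (Or.inr (Or.inl ⟨⟨0, hn⟩, rfl⟩))))⟩
      · exact ⟨QLB.cnt i ⟨((j : ℕ) + 1) % nthPrime i, Nat.mod_lt _ (nthPrime_pos i)⟩, [],
          Or.inr (Or.inr (Or.inr (Or.inr (Or.inr (Or.inl ⟨i, j, rfl⟩)))))⟩

/-- The partition of the lower-bound game: Player 1 owns exactly `q_□`. -/
def lbOwn {n : ℕ} : QLB n → Fin 2
  | QLB.qbox => 1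
  | _ => 0

/-- The coloring of the lower-bound game: `col (q_i^0) = 0`, all other states
have color `1`. -/
def lbCol {n : ℕ} : QLB n → ℕ
  | QLB.cnt _ j => if (j : ℕ) = 0 then 0 else 1
  | _ => 1

/-- The strategy for Player 0: push until the stack has height `N`, then move
to `q_□`; elsewhere play the forced / arbitrary legal move. -/
noncomputable def lbSigma (n : ℕ) (hn : 1 ≤ n) (N : ℕ) :
    List (Config (QLB n) Unit) → Config (QLB n) Unit → Config (QLB n) Unit :=
  fun _ v =>
    match v with
    | (QLB.qin, γ) =>
        if γ.length + 1 = N then (QLB.qbox, () :: γ) else (QLB.qin, () :: γ)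
    | (QLB.qbox, []) => (QLB.qbox, [])
    | (QLB.qbox, _ :: rest) =>
        (QLB.cnt ⟨0, hn⟩ ⟨0, nthPrime_pos _⟩, () :: rest)
    | (QLB.cnt i j, []) => (QLB.cnt i j, [])
    | (QLB.cnt i j, _ :: rest) =>
        (QLB.cnt i ⟨((j : ℕ) + 1) % nthPrime i, Nat.mod_lt _ (nthPrime_pos _)⟩, rest)

lemma lbSigma_strategy (n : ℕ) (hn : 1 ≤ n) (N : ℕ) :
    IsStrategy ((lbPDS n hn).graph lbOwn) (lbSigma n hn N) := by
  rintro h ⟨q, γ⟩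
  rcases q with _ | _ | ⟨i, j⟩ <;> rcases γ with _ | ⟨⟨⟩, rest⟩
  · show (lbPDS n hn).step _ _
    simp only [lbSigma]
    split
    · exact Or.inl ⟨rfl, Or.inr (Or.inr (Or.inr (Or.inl rfl)))⟩
    · exact Or.inl ⟨rfl, Or.inr (Or.inl rfl)⟩
  · show (lbPDS n hn).step _ _
    simp only [lbSigma]
    split
    · exact Or.inr ⟨(), rest, [(), ()], rfl, Or.inr (Or.inr (Or.inl rfl)), rfl⟩
    · exact Or.inr ⟨(), rest, [(), ()], rfl, Or.inl rfl, rfl⟩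
  · exact Or.inl ⟨rfl, Or.inr (Or.inr (Or.inr (Or.inr (Or.inr (Or.inr
      ⟨QLB.qbox, (fun h => nomatch h), rfl⟩)))))⟩
  · exact Or.inr ⟨(), rest, [()], rfl,
      Or.inr (Or.inr (Or.inr (Or.inr (Or.inl ⟨⟨0, hn⟩, rfl⟩)))), rfl⟩
  · exact Or.inl ⟨rfl, Or.inr (Or.inr (Or.inr (Or.inr (Or.inr (Or.inr
      ⟨QLB.cnt i j, (fun h => nomatch h), rfl⟩)))))⟩
  · exact Or.inr ⟨(), rest, [], rfl,
      Or.inr (Or.inr (Or.inr (Or.inr (Or.inr (Or.inl ⟨i, j, rfl⟩))))), rfl⟩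

lemma step_cnt_cons {n : ℕ} {hn : 1 ≤ n} {i : Fin n} {j : Fin (nthPrime i)}
    {a : Unit} {rest : List Unit} {v : Config (QLB n) Unit}
    (h : (lbPDS n hn).step (QLB.cnt i j, a :: rest) v) :
    v = (QLB.cnt i ⟨((j : ℕ) + 1) % nthPrime i, Nat.mod_lt _ (nthPrime_pos _)⟩, rest) := by
  rcases h with ⟨h1, -⟩ | ⟨b, rest', α, heq, hΔ, hv⟩
  · exact absurd h1 (List.cons_ne_nil _ _)
  · obtain ⟨rfl, rfl⟩ : b = a ∧ rest' = rest := by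
      injection heq with h1 h2; exact ⟨h1.symm, h2.symm⟩
    rcases hΔ with h | h | h | h | ⟨i', h⟩ | ⟨i', j', h⟩ | ⟨q, hq, h⟩ <;>
      simp only [Prod.mk.injEq] at h
    · exact absurd h.1 (fun h => nomatch h)
    · exact absurd h.1 (fun h => nomatch h)
    · exact absurd h.1 (fun h => nomatch h)
    · exact absurd h.1 (fun h => nomatch h)
    · exact absurd h.1 (fun h => nomatch h)
    · obtain ⟨h1, -, h3, h4⟩ := h
      injection h1 with hi hj
      subst hi
      obtain rfl : j = j' := eq_of_heq hj
      subst h4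
      rw [Prod.ext_iff]
      exact ⟨h3, by simp [hv]⟩
    · exact absurd h.2.1 (fun h => nomatch h)

lemma step_cnt_nil {n : ℕ} {hn : 1 ≤ n} {i : Fin n} {j : Fin (nthPrime i)}
    {v : Config (QLB n) Unit}
    (h : (lbPDS n hn).step (QLB.cnt i j, []) v) : v = (QLB.cnt i j, []) := by
  rcases h with ⟨-, hΔ⟩ | ⟨b, rest', α, heq, -, -⟩
  · rcases hΔ with h | h | h | h | ⟨i', h⟩ | ⟨i', j', h⟩ | ⟨q, hq, h⟩ <;>
      simp only [Prod.mk.injEq] at h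
    · exact absurd h.1 (fun h => nomatch h)
    · exact absurd h.1 (fun h => nomatch h)
    · exact absurd h.1 (fun h => nomatch h)
    · exact absurd h.1 (fun h => nomatch h)
    · exact absurd h.1 (fun h => nomatch h)
    · exact absurd h.2.1 (fun h => nomatch h)
    · obtain ⟨h1, -, h3, h4⟩ := h
      rw [Prod.ext_iff]
      exact ⟨h3.trans h1.symm, h4⟩
  · exact absurd heq (by simp)

lemma step_qbox_cons {n : ℕ} {hn : 1 ≤ n} {a : Unit} {rest : List Unit}
    {v : Config (QLB n) Unit}
    (h : (lbPDS n hn).step (QLB.qbox, a :: rest) v) :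
    ∃ i : Fin n, v = (QLB.cnt i ⟨0, nthPrime_pos i⟩, a :: rest) := by
  rcases h with ⟨h1, -⟩ | ⟨b, rest', α, heq, hΔ, hv⟩
  · exact absurd h1 (List.cons_ne_nil _ _)
  · obtain ⟨rfl, rfl⟩ : b = a ∧ rest' = rest := by
      injection heq with h1 h2; exact ⟨h1.symm, h2.symm⟩
    rcases hΔ with h | h | h | h | ⟨i', h⟩ | ⟨i', j', h⟩ | ⟨q, hq, h⟩ <;>
      simp only [Prod.mk.injEq] at h
    · exact absurd h.1 (fun h => nomatch h)
    · exact absurd h.1 (fun h => nomatch h)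
    · exact absurd h.1 (fun h => nomatch h)
    · exact absurd h.1 (fun h => nomatch h)
    · obtain ⟨-, -, h3, h4⟩ := h
      subst h4
      exact ⟨i', by rw [Prod.ext_iff]; exact ⟨h3, by simp [hv]⟩⟩
    · exact absurd h.1 (fun h => nomatch h)
    · exact absurd h.2.1 (fun h => nomatch h)

/-- Player 0 wins the pushdown parity game `(G_n, col_n)` of the lower-bound
family. -/
theorem stmt16 (n : ℕ) (hn : 1 ≤ n) :
    WinsGame ((lbPDS n hn).graph lbOwn) (fun v => lbCol v.1) 0 := by
  classical
  obtain ⟨N, hNdef⟩ : ∃ N, N = ∏ i : Fin n, nthPrime (i : ℕ) := ⟨_, rfl⟩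
  have hNpos : 0 < N := hNdef ▸ Finset.prod_pos fun i _ => nthPrime_pos _
  have hdvd : ∀ i : Fin n, nthPrime (i : ℕ) ∣ N :=
    fun i => hNdef ▸ Finset.dvd_prod_of_mem _ (Finset.mem_univ i)
  obtain ⟨M, hM⟩ : ∃ M, N = M + 1 := ⟨N - 1, (Nat.succ_pred_eq_of_pos hNpos).symm⟩
  refine ⟨lbSigma n hn N, lbSigma_strategy n hn N, ?_⟩
  rintro ρ ⟨⟨h0, hstep⟩, hσ⟩
  -- phase 1: pushing
  have hA : ∀ m, m < N → ρ m = (QLB.qin, List.replicate m ()) := by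
    intro m hm
    induction m with
    | zero => exact h0
    | succ m ih =>
      have hm' : m < N := Nat.lt_of_succ_lt hm
      have h1 := ih hm'
      have h2 := hσ m (by rw [h1]; rfl)
      rw [h2, h1]
      simp only [lbSigma, List.length_replicate]
      rw [if_neg (Nat.ne_of_lt hm)]
      rw [← List.replicate_succ]
  -- reaching q_□ with stack height N
  have hB : ρ N = (QLB.qbox, List.replicate N ()) := by
    have h1 := hA M (by omega)
    have h2 := hσ M (by rw [h1]; rfl)
    rw [hM]
    rw [h2, h1]
    simp only [lbSigma, List.length_replicate]
    rw [if_pos hM.symm]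
    rw [← List.replicate_succ]
  -- Player 1 picks a prime
  obtain ⟨i, hC⟩ : ∃ i : Fin n,
      ρ (N + 1) = (QLB.cnt i ⟨0, nthPrime_pos i⟩, List.replicate N ()) := by
    have hs := hstep N
    rw [hB] at hs
    obtain ⟨c, hc⟩ : ∃ c, List.replicate N () = () :: c :=
      ⟨List.replicate M (), by rw [hM, List.replicate_succ]⟩
    rw [hc] at hs
    obtain ⟨i, hi⟩ := step_qbox_cons hs
    exact ⟨i, by rw [hi, hc]⟩
  -- phase 2: popping while counting mod p_i
  have hD : ∀ k, k ≤ N →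
      ρ (N + 1 + k) = (QLB.cnt i ⟨k % nthPrime (i : ℕ), Nat.mod_lt _ (nthPrime_pos _)⟩,
        List.replicate (N - k) ()) := by
    intro k hk
    induction k with
    | zero => simpa using hC
    | succ k ih =>
      have hk' : k ≤ N := Nat.le_of_succ_le hk
      have h1 := ih hk'
      have hrep : List.replicate (N - k) () = () :: List.replicate (N - (k + 1)) () := by
        have : N - k = (N - (k + 1)) + 1 := by omega
        rw [this, List.replicate_succ]
      rw [hrep] at h1
      have h2 := hstep (N + 1 + k)
      rw [h1] at h2
      have h3 := step_cnt_cons h2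
      have : N + 1 + (k + 1) = N + 1 + k + 1 := by omega
      rw [this, h3]
      simp [Prod.ext_iff, QLB.cnt.injEq, Fin.ext_iff, Nat.mod_add_mod]
  -- at the bottom of the stack forever
  have hzero : N % nthPrime (i : ℕ) = 0 := by
    obtain ⟨c, hc⟩ := hdvd i
    rw [hc, Nat.mul_mod_right]
  have hE : ∀ m, ρ (2 * N + 1 + m) = (QLB.cnt i ⟨0, nthPrime_pos i⟩, []) := by
    intro m
    induction m with
    | zero =>
      have h1 := hD N le_rfl
      have : N + 1 + N = 2 * N + 1 + 0 := by omega
      rw [this] at h1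
      rw [h1]
      simp [hzero]
    | succ m ih =>
      have h2 := hstep (2 * N + 1 + m)
      rw [ih] at h2
      have h3 := step_cnt_nil h2
      have : 2 * N + 1 + (m + 1) = 2 * N + 1 + m + 1 := by omega
      rw [this, h3]
  -- conclude
  have h0mem : (0 : ℕ) ∈ {c | ∀ N', ∃ m, N' ≤ m ∧ lbCol (ρ m).1 = c} := by
    intro N'
    refine ⟨2 * N + 1 + N', Nat.le_add_left _ _, ?_⟩
    rw [hE N']
    rfl
  show minInfCol _ ρ % 2 = 0
  have : minInfCol (fun v => lbCol v.1) ρ = 0 :=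
    Nat.sInf_eq_zero.mpr (Or.inl h0mem)
  rw [this]

end FDGames
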